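/- Let N, m be positive integers, Φ ∈ ℝ^{N×m}, ρ* ∈ ℝ^m, σ > 0, and let w be a random vector in ℝ^N with E[w] = 0 and E[w wᵀ] = σ²·I_N. Set y = Φρ* + w. For a positive semidefinite matrix P ∈ ℝ^{m×m} and scalar γ > 0 such that P ΦᵀΦ + γ I_m is invertible, define the regularized least-squares estimate ρ̂(P, γ) = (P ΦᵀΦ + γ I_m)^{-1} P Φᵀ y and its MSE matrix M(P, γ) = E[(ρ̂(P,γ) − ρ*)(ρ̂(P,γ) − ρ*)ᵀ]. Then the matrix ρ*ρ*ᵀ ΦᵀΦ + σ² I_m is invertible, and for every admissible pair (P, γ), the matrix M(P, γ) − M(ρ*ρ*ᵀ, σ²) is positive semidefinite. -/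

import Mathlib

open MeasureTheory Matrix

lemma vecMulVec_sq {n : ℕ} (a u : Fin n → ℝ) :
    vecMulVec a u * vecMulVec a u = (u ⬝ᵥ a) • vecMulVec a u := by
  ext i j
  simp only [mul_apply, vecMulVec_apply, Matrix.smul_apply, smul_eq_mul, dotProduct]
  rw [Finset.sum_mul]
  exact Finset.sum_congr rfl fun k _ => by ring

lemma sherman {n : ℕ} (σ : ℝ) (hσ : 0 < σ) (a u : Fin n → ℝ) (h : 0 ≤ u ⬝ᵥ a) :
    IsUnit (vecMulVec a u + σ ^ 2 • (1 : Matrix (Fin n) (Fin n) ℝ)) := by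
  set V := vecMulVec a u with hV
  set d := u ⬝ᵥ a with hd
  have hσ2 : (0:ℝ) < σ ^ 2 := by positivity
  have hsd : σ ^ 2 + d ≠ 0 := by positivity
  set k : ℝ := (σ ^ 2 * (σ ^ 2 + d))⁻¹ with hk
  have hBC : (V + σ ^ 2 • (1 : Matrix (Fin n) (Fin n) ℝ)) *
      ((σ ^ 2)⁻¹ • (1 : Matrix (Fin n) (Fin n) ℝ) - k • V) = 1 := by
    have h2 : V * V = d • V := vecMulVec_sq a u
    simp only [Matrix.add_mul, Matrix.mul_sub, Matrix.mul_smul, Matrix.smul_mul,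
      Matrix.mul_one, Matrix.one_mul, h2]
    match_scalars <;> (field_simp [hk]; try ring)
    all_goals (rw [hk]; field_simp [hσ.ne', hsd]; ring)
  exact ⟨⟨_, _, hBC, mul_eq_one_comm.mp hBC⟩, rfl⟩

lemma conj_vecMulVec {p q : ℕ} (M : Matrix (Fin p) (Fin q) ℝ) (v : Fin q → ℝ) :
    M * vecMulVec v v * Mᵀ = vecMulVec (M *ᵥ v) (M *ᵥ v) := by
  ext i j
  simp only [mul_apply, vecMulVec_apply, mulVec, dotProduct, transpose_apply]
  rw [Fintype.sum_mul_sum, Finset.sum_comm]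
  exact Finset.sum_congr rfl fun l _ => by
    rw [Finset.sum_mul]
    exact Finset.sum_congr rfl fun k _ => by ring

lemma psd_vecMulVec {n : ℕ} (v : Fin n → ℝ) : (vecMulVec v v).PosSemidef := by
  rw [posSemidef_iff_dotProduct_mulVec]
  constructor
  · ext i j
    simp [vecMulVec_apply, conjTranspose_apply, mul_comm]
  · intro x
    have : star x ⬝ᵥ (vecMulVec v v *ᵥ x) = (v ⬝ᵥ x) * (v ⬝ᵥ x) := by
      simp only [dotProduct, mulVec, vecMulVec_apply, star_trivial]
      rw [Fintype.sum_mul_sum, Finset.sum_comm]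
      refine Finset.sum_congr rfl fun l _ => ?_
      rw [Finset.mul_sum]
      exact Finset.sum_congr rfl fun k _ => by ring
    rw [this]
    exact mul_self_nonneg _

lemma psd_smul_one {n : ℕ} {c : ℝ} (hc : 0 ≤ c) :
    (c • (1 : Matrix (Fin n) (Fin n) ℝ)).PosSemidef := by
  rw [posSemidef_iff_dotProduct_mulVec]
  constructor
  · unfold Matrix.IsHermitian
    ext i j
    by_cases h : i = j <;> simp [Matrix.conjTranspose_apply, Matrix.one_apply, h, eq_comm]
  · intro x
    rw [smul_mulVec, Matrix.one_mulVec, dotProduct_smul]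
    simp only [star_trivial, smul_eq_mul]
    exact mul_nonneg hc (Finset.sum_nonneg fun i _ => mul_self_nonneg _)

lemma vecMulVec_mul {p q r : ℕ} (a : Fin p → ℝ) (b : Fin q → ℝ)
    (M : Matrix (Fin q) (Fin r) ℝ) :
    vecMulVec a b * M = vecMulVec a (Mᵀ *ᵥ b) := by
  ext i j
  simp only [mul_apply, vecMulVec_apply, mulVec, dotProduct, transpose_apply]
  rw [Finset.mul_sum]
  exact Finset.sum_congr rfl fun k _ => by ring

lemma int_prod {Ω : Type*} [MeasurableSpace Ω] (P : Measure Ω) [IsProbabilityMeasure P]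
    {N : ℕ} (w : Ω → Fin N → ℝ) (σ : ℝ)
    (hw_int : ∀ i, Integrable (fun ω => w ω i) P)
    (hw_mean : ∀ i, ∫ ω, w ω i ∂P = 0)
    (hw_cov_int : ∀ i j, Integrable (fun ω => w ω i * w ω j) P)
    (hw_cov : ∀ i j, ∫ ω, w ω i * w ω j ∂P = if i = j then σ ^ 2 else 0)
    (a b : ℝ) (f g : Fin N → ℝ) :
    ∫ ω, (a + ∑ k, f k * w ω k) * (b + ∑ k, g k * w ω k) ∂P
      = a * b + σ ^ 2 * ∑ k, f k * g k := by
  have hF : Integrable (fun ω => ∑ k, f k * w ω k) P :=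
    integrable_finset_sum _ fun k _ => (hw_int k).const_mul _
  have hG : Integrable (fun ω => ∑ k, g k * w ω k) P :=
    integrable_finset_sum _ fun k _ => (hw_int k).const_mul _
  have hprod : ∀ ω : Ω, (∑ k, f k * w ω k) * (∑ k, g k * w ω k)
      = ∑ k, ∑ l, (f k * g l) * (w ω k * w ω l) := by
    intro ω
    rw [Fintype.sum_mul_sum]
    exact Finset.sum_congr rfl fun k _ => Finset.sum_congr rfl fun l _ => by ring
  have hFG : Integrable (fun ω => (∑ k, f k * w ω k) * (∑ k, g k * w ω k)) P := by
    simp only [hprod]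
    exact integrable_finset_sum _ fun k _ =>
      integrable_finset_sum _ fun l _ => (hw_cov_int k l).const_mul _
  have key : (fun ω => (a + ∑ k, f k * w ω k) * (b + ∑ k, g k * w ω k))
      = fun ω => a * b + (a * ∑ k, g k * w ω k + (b * ∑ k, f k * w ω k +
          (∑ k, f k * w ω k) * (∑ k, g k * w ω k))) := by
    funext ω; ring
  have hI3 : Integrable (fun ω => b * ∑ k, f k * w ω k +
      (∑ k, f k * w ω k) * (∑ k, g k * w ω k)) P := (hF.const_mul b).add hFG
  have hI2 : Integrable (fun ω => a * ∑ k, g k * w ω k +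
      (b * ∑ k, f k * w ω k + (∑ k, f k * w ω k) * (∑ k, g k * w ω k))) P :=
    (hG.const_mul a).add hI3
  rw [key, integral_add (integrable_const _) hI2,
    integral_add (hG.const_mul a) hI3,
    integral_add (hF.const_mul b) hFG]
  have hzero : ∀ (h : Fin N → ℝ) (c : ℝ), ∫ ω, c * ∑ k, h k * w ω k ∂P = 0 := by
    intro h c
    rw [integral_const_mul, integral_finset_sum _ fun k _ => (hw_int k).const_mul _]
    simp [integral_const_mul, hw_mean]
  have hcov : ∫ ω, (∑ k, f k * w ω k) * (∑ k, g k * w ω k) ∂P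
      = σ ^ 2 * ∑ k, f k * g k := by
    simp only [hprod]
    rw [integral_finset_sum _ fun k _ =>
      integrable_finset_sum _ fun l _ => (hw_cov_int k l).const_mul _]
    rw [Finset.mul_sum]
    refine Finset.sum_congr rfl fun k _ => ?_
    rw [integral_finset_sum _ fun l _ => (hw_cov_int k l).const_mul _]
    simp only [integral_const_mul, hw_cov, mul_ite, mul_zero]
    rw [Finset.sum_ite_eq Finset.univ k]
    simp only [Finset.mem_univ, if_true]
    ring
  rw [hzero, hzero, hcov]
  simp

lemma mse_matrix {Ω : Type*} [MeasurableSpace Ω] (P : Measure Ω) [IsProbabilityMeasure P]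
    {N m : ℕ} (w : Ω → Fin N → ℝ) (σ : ℝ)
    (hw_int : ∀ i, Integrable (fun ω => w ω i) P)
    (hw_mean : ∀ i, ∫ ω, w ω i ∂P = 0)
    (hw_cov_int : ∀ i j, Integrable (fun ω => w ω i * w ω j) P)
    (hw_cov : ∀ i j, ∫ ω, w ω i * w ω j ∂P = if i = j then σ ^ 2 else 0)
    (L : Matrix (Fin m) (Fin N) ℝ) (b : Fin m → ℝ) :
    (Matrix.of fun i j => ∫ ω, (b i + (L *ᵥ w ω) i) * (b j + (L *ᵥ w ω) j) ∂P)
      = vecMulVec b b + σ ^ 2 • (L * Lᵀ) := by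
  ext i j
  simp only [Matrix.of_apply, mulVec, dotProduct]
  rw [int_prod P w σ hw_int hw_mean hw_cov_int hw_cov (b i) (b j) (L i) (L j)]
  simp [vecMulVec_apply, mul_apply, transpose_apply]

lemma key_alg {N m : ℕ} (Φ : Matrix (Fin N) (Fin m) ℝ) (R : Matrix (Fin m) (Fin m) ℝ)
    (hR : Rᵀ = R) (σ : ℝ) (S T : Matrix (Fin N) (Fin N) ℝ)
    (hS : S = Φ * R * Φᵀ + σ ^ 2 • 1) (hST : S * T = 1) (hTS : T * S = 1) (hT : Tᵀ = T)
    (L : Matrix (Fin m) (Fin N) ℝ) :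
    (L * Φ - 1) * R * (L * Φ - 1)ᵀ + σ ^ 2 • (L * Lᵀ)
      = (L - R * Φᵀ * T) * S * (L - R * Φᵀ * T)ᵀ + (R - R * Φᵀ * T * Φ * R) := by
  have h1 : (L - R * Φᵀ * T) * S = L * S - R * Φᵀ := by
    rw [Matrix.sub_mul, Matrix.mul_assoc (R * Φᵀ) T S, hTS, Matrix.mul_one]
  have h2 : (L - R * Φᵀ * T)ᵀ = Lᵀ - T * (Φ * R) := by
    simp [Matrix.transpose_sub, Matrix.transpose_mul, hT, hR, Matrix.mul_assoc]
  rw [h1, h2]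
  simp only [Matrix.sub_mul, Matrix.mul_sub]
  have h3 : L * S * (T * (Φ * R)) = L * (Φ * R) := by
    rw [Matrix.mul_assoc L S, ← Matrix.mul_assoc S T, hST, Matrix.one_mul]
  have h4 : R * Φᵀ * (T * (Φ * R)) = R * Φᵀ * T * Φ * R := by
    simp [Matrix.mul_assoc]
  rw [h3, h4, hS]
  have h5 : σ ^ 2 • (L * Lᵀ) = L * (σ ^ 2 • (1 : Matrix (Fin N) (Fin N) ℝ)) * Lᵀ := by
    rw [Matrix.mul_smul, Matrix.mul_one, Matrix.smul_mul]
  rw [h5, Matrix.transpose_sub, Matrix.transpose_mul, Matrix.transpose_one]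
  simp only [Matrix.mul_add, Matrix.add_mul]
  noncomm_ring
  simp only [Matrix.mul_assoc]
  abel

/-- Optimality of the regularization `P_r = ρ*ρ*ᵀ`, `γ = σ²`: the MSE matrix of any
admissible regularized least-squares estimator dominates that of the optimal one in the
positive semidefinite ordering. -/
theorem optimal_regularization
    {Ω : Type*} [MeasurableSpace Ω] (P : Measure Ω) [IsProbabilityMeasure P]
    (N m : ℕ) (hN : 0 < N) (hm : 0 < m)
    (Φ : Matrix (Fin N) (Fin m) ℝ) (ρs : Fin m → ℝ) (σ : ℝ) (hσ : 0 < σ)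
    (w : Ω → Fin N → ℝ) (hw_meas : Measurable w)
    (hw_int : ∀ i, Integrable (fun ω => w ω i) P)
    (hw_mean : ∀ i, ∫ ω, w ω i ∂P = 0)
    (hw_cov_int : ∀ i j, Integrable (fun ω => w ω i * w ω j) P)
    (hw_cov : ∀ i j, ∫ ω, w ω i * w ω j ∂P = if i = j then σ ^ 2 else 0)
    (y : Ω → Fin N → ℝ) (hy : ∀ ω, y ω = Φ *ᵥ ρs + w ω)
    (ρhat : Matrix (Fin m) (Fin m) ℝ → ℝ → Ω → Fin m → ℝ)
    (hρhat : ∀ Pr γ ω, ρhat Pr γ ω = (Pr * Φᵀ * Φ + γ • 1)⁻¹ *ᵥ (Pr *ᵥ (Φᵀ *ᵥ y ω)))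
    (M : Matrix (Fin m) (Fin m) ℝ → ℝ → Matrix (Fin m) (Fin m) ℝ)
    (hM : ∀ Pr γ, M Pr γ
      = Matrix.of fun i j => ∫ ω, (ρhat Pr γ ω i - ρs i) * (ρhat Pr γ ω j - ρs j) ∂P) :
    IsUnit (vecMulVec ρs ρs * Φᵀ * Φ + σ ^ 2 • (1 : Matrix (Fin m) (Fin m) ℝ)) ∧
    ∀ (Pr : Matrix (Fin m) (Fin m) ℝ) (γ : ℝ), Pr.PosSemidef → 0 < γ →
      IsUnit (Pr * Φᵀ * Φ + γ • (1 : Matrix (Fin m) (Fin m) ℝ)) →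
      (M Pr γ - M (vecMulVec ρs ρs) (σ ^ 2)).PosSemidef := by
  set R : Matrix (Fin m) (Fin m) ℝ := vecMulVec ρs ρs with hRdef
  have hRsym : Rᵀ = R := by
    ext i j
    simp [hRdef, Matrix.transpose_apply, vecMulVec_apply, mul_comm]
  set v : Fin N → ℝ := Φ *ᵥ ρs with hv
  set S : Matrix (Fin N) (Fin N) ℝ := Φ * R * Φᵀ + σ ^ 2 • 1 with hSdef
  have hΦR : Φ * R * Φᵀ = vecMulVec v v := conj_vecMulVec Φ ρs
  have hvv : (0:ℝ) ≤ v ⬝ᵥ v := Finset.sum_nonneg fun i _ => mul_self_nonneg _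
  have hSunit : IsUnit S := by rw [hSdef, hΦR]; exact sherman σ hσ v v hvv
  have hSdet : IsUnit S.det := (Matrix.isUnit_iff_isUnit_det S).mp hSunit
  have hST : S * S⁻¹ = 1 := Matrix.mul_nonsing_inv S hSdet
  have hTS : S⁻¹ * S = 1 := Matrix.nonsing_inv_mul S hSdet
  have hSsym : Sᵀ = S := by
    rw [hSdef]
    simp [Matrix.transpose_add, Matrix.transpose_mul, Matrix.transpose_smul,
      Matrix.transpose_one, hRsym, Matrix.mul_assoc]
  have hTsym : (S⁻¹)ᵀ = S⁻¹ := by rw [Matrix.transpose_nonsing_inv, hSsym]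
  have hSpsd : S.PosSemidef := by
    rw [hSdef, hΦR]
    exact (psd_vecMulVec v).add (psd_smul_one (by positivity))
  have hA1 : R * Φᵀ * Φ = vecMulVec ρs (Φᵀ *ᵥ (Φ *ᵥ ρs)) := by
    rw [hRdef, vecMulVec_mul, vecMulVec_mul, transpose_transpose]
  have hu : (0:ℝ) ≤ (Φᵀ *ᵥ (Φ *ᵥ ρs)) ⬝ᵥ ρs := by
    rw [Matrix.mulVec_transpose, ← Matrix.dotProduct_mulVec]
    exact hvv
  have hAopt : IsUnit (R * Φᵀ * Φ + σ ^ 2 • (1 : Matrix (Fin m) (Fin m) ℝ)) := by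
    rw [hA1]; exact sherman σ hσ ρs _ hu
  refine ⟨hAopt, ?_⟩
  intro Pr γ hPr hγ hA
  -- MSE formula
  have hMform : ∀ (Q : Matrix (Fin m) (Fin m) ℝ) (γ' : ℝ) (L : Matrix (Fin m) (Fin N) ℝ),
      L = (Q * Φᵀ * Φ + γ' • (1 : Matrix (Fin m) (Fin m) ℝ))⁻¹ * Q * Φᵀ →
      M Q γ' = (L * Φ - 1) * R * (L * Φ - 1)ᵀ + σ ^ 2 • (L * Lᵀ) := by
    intro Q γ' L hL
    have vecid : ∀ z : Fin N → ℝ,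
        (Q * Φᵀ * Φ + γ' • (1 : Matrix (Fin m) (Fin m) ℝ))⁻¹ *ᵥ (Q *ᵥ (Φᵀ *ᵥ (Φ *ᵥ ρs + z))) - ρs
          = ((Q * Φᵀ * Φ + γ' • 1)⁻¹ * Q * Φᵀ * Φ - 1) *ᵥ ρs
            + ((Q * Φᵀ * Φ + γ' • 1)⁻¹ * Q * Φᵀ) *ᵥ z := by
      intro z
      simp only [Matrix.mulVec_add, Matrix.mulVec_mulVec, Matrix.sub_mulVec,
        Matrix.one_mulVec, Matrix.mul_assoc]
      abel
    have hpt : ∀ ω i, ρhat Q γ' ω i - ρs i = ((L * Φ - 1) *ᵥ ρs) i + (L *ᵥ w ω) i := by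
      intro ω i
      rw [hρhat, hy, hL]
      simpa using congrFun (vecid (w ω)) i
    rw [hM]
    have e : (Matrix.of fun i j => ∫ ω, (ρhat Q γ' ω i - ρs i) * (ρhat Q γ' ω j - ρs j) ∂P)
        = Matrix.of fun i j =>
            ∫ ω, (((L * Φ - 1) *ᵥ ρs) i + (L *ᵥ w ω) i)
              * (((L * Φ - 1) *ᵥ ρs) j + (L *ᵥ w ω) j) ∂P := by
      simp only [hpt]
    rw [e, mse_matrix P w σ hw_int hw_mean hw_cov_int hw_cov L ((L * Φ - 1) *ᵥ ρs),
      ← conj_vecMulVec (L * Φ - 1) ρs, ← hRdef]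
  -- the optimal estimator matrix
  have push : (R * Φᵀ * Φ + σ ^ 2 • (1 : Matrix (Fin m) (Fin m) ℝ)) * (R * Φᵀ * S⁻¹)
      = R * Φᵀ := by
    have h6 : (R * Φᵀ * Φ + σ ^ 2 • (1 : Matrix (Fin m) (Fin m) ℝ)) * (R * Φᵀ)
        = R * Φᵀ * S := by
      rw [hSdef]
      simp only [Matrix.add_mul, Matrix.mul_add, Matrix.smul_mul, Matrix.mul_smul,
        Matrix.one_mul, Matrix.mul_one, Matrix.mul_assoc]
    calc (R * Φᵀ * Φ + σ ^ 2 • (1 : Matrix (Fin m) (Fin m) ℝ)) * (R * Φᵀ * S⁻¹)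
        = ((R * Φᵀ * Φ + σ ^ 2 • 1) * (R * Φᵀ)) * S⁻¹ := by simp [Matrix.mul_assoc]
      _ = (R * Φᵀ * S) * S⁻¹ := by rw [h6]
      _ = R * Φᵀ * (S * S⁻¹) := by rw [Matrix.mul_assoc]
      _ = R * Φᵀ := by rw [hST, Matrix.mul_one]
  have hAoptdet : IsUnit (R * Φᵀ * Φ + σ ^ 2 • (1 : Matrix (Fin m) (Fin m) ℝ)).det :=
    (Matrix.isUnit_iff_isUnit_det _).mp hAopt
  have hLopt : (R * Φᵀ * Φ + σ ^ 2 • (1 : Matrix (Fin m) (Fin m) ℝ))⁻¹ * R * Φᵀ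
      = R * Φᵀ * S⁻¹ := by
    calc (R * Φᵀ * Φ + σ ^ 2 • (1 : Matrix (Fin m) (Fin m) ℝ))⁻¹ * R * Φᵀ
        = (R * Φᵀ * Φ + σ ^ 2 • 1)⁻¹ * (R * Φᵀ) := by rw [Matrix.mul_assoc]
      _ = (R * Φᵀ * Φ + σ ^ 2 • 1)⁻¹ * ((R * Φᵀ * Φ + σ ^ 2 • 1) * (R * Φᵀ * S⁻¹)) := by
            rw [push]
      _ = ((R * Φᵀ * Φ + σ ^ 2 • 1)⁻¹ * (R * Φᵀ * Φ + σ ^ 2 • 1)) * (R * Φᵀ * S⁻¹) := by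
            simp [Matrix.mul_assoc]
      _ = R * Φᵀ * S⁻¹ := by rw [Matrix.nonsing_inv_mul _ hAoptdet, Matrix.one_mul]
  rw [hMform Pr γ _ rfl, hMform R (σ ^ 2) _ rfl, hLopt,
    key_alg Φ R hRsym σ S S⁻¹ hSdef hST hTS hTsym ((Pr * Φᵀ * Φ + γ • 1)⁻¹ * Pr * Φᵀ),
    key_alg Φ R hRsym σ S S⁻¹ hSdef hST hTS hTsym (R * Φᵀ * S⁻¹)]
  simp only [sub_self, Matrix.zero_mul, zero_add, add_sub_cancel_right]
  have := hSpsd.mul_mul_conjTranspose_same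
    ((Pr * Φᵀ * Φ + γ • 1)⁻¹ * Pr * Φᵀ - R * Φᵀ * S⁻¹)
  rwa [Matrix.conjTranspose_eq_transpose_of_trivial] at this
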